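/- Let y : [0,1] → ℝ be continuous, let a : [0,1] → [0,∞) be continuous with α = ∫₀¹ a(t) dt satisfying 0 < α < 1. If u : [0,1] → ℝ is four times continuously differentiable and satisfies u''''(t) + y(t) = 0 for all t ∈ (0,1), together with the boundary conditions u'(0) = u'(1) = u''(0) = 0 and u(0) = ∫₀¹ a(s) u(s) ds, then for every t ∈ [0,1], u(t) = ∫₀¹ ( G(t,s) + (1/(1-α)) ∫₀¹ a(τ) G(τ,s) dτ ) y(s) ds. -/

import Mathlib

open Set MeasureTheory intervalIntegral

/-- The Green's function of the fourth-order problem. -/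
noncomputable def G (t s : ℝ) : ℝ :=
  if s ≤ t then (t ^ 3 * (1 - s) ^ 2 - (t - s) ^ 3) / 6
  else t ^ 3 * (1 - s) ^ 2 / 6

lemma G_cont : Continuous fun p : ℝ × ℝ => G p.1 p.2 := by
  unfold G
  apply Continuous.if_le
  · fun_prop
  · fun_prop
  · exact continuous_snd
  · exact continuous_fst
  · intro p h; rw [h]; ring

lemma hasDerivAt_g1 (t x : ℝ) :
    HasDerivAt (fun s => (t ^ 3 * (1 - s) ^ 2 - (t - s) ^ 3) / 6)
      ((3 * (t - x) ^ 2 - 2 * t ^ 3 * (1 - x)) / 6) x := by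
  have h := ((((hasDerivAt_id x).const_sub (1:ℝ)).pow 2).const_mul (t ^ 3)).sub
    (((hasDerivAt_id x).const_sub t).pow 3)
  have h2 := h.div_const 6
  refine h2.congr_deriv ?_
  simp; ring

lemma hasDerivAt_g1' (t x : ℝ) :
    HasDerivAt (fun s => (3 * (t - s) ^ 2 - 2 * t ^ 3 * (1 - s)) / 6)
      (t ^ 3 / 3 - (t - x)) x := by
  have h := ((((hasDerivAt_id x).const_sub t).pow 2).const_mul 3).sub
    (((hasDerivAt_id x).const_sub (1:ℝ)).const_mul (2 * t ^ 3))
  have h2 := h.div_const 6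
  refine h2.congr_deriv ?_
  simp; ring

lemma hasDerivAt_g1'' (t x : ℝ) :
    HasDerivAt (fun s => t ^ 3 / 3 - (t - s)) 1 x := by
  have h := ((hasDerivAt_id x).const_sub t).const_sub (t ^ 3 / 3)
  refine h.congr_deriv ?_
  norm_num

lemma hasDerivAt_g2 (t x : ℝ) :
    HasDerivAt (fun s => t ^ 3 * (1 - s) ^ 2 / 6) (-(t ^ 3 * (1 - x)) / 3) x := by
  have h := ((((hasDerivAt_id x).const_sub (1:ℝ)).pow 2).const_mul (t ^ 3)).div_const 6
  refine h.congr_deriv ?_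
  simp; ring

lemma hasDerivAt_g2' (t x : ℝ) :
    HasDerivAt (fun s => -(t ^ 3 * (1 - s)) / 3) (t ^ 3 / 3) x := by
  have h := ((((hasDerivAt_id x).const_sub (1:ℝ)).const_mul (t ^ 3)).neg).div_const 3
  refine h.congr_deriv ?_
  simp

set_option maxHeartbeats 1000000 in
lemma key (y u : ℝ → ℝ)
    (hy : ContinuousOn y (Set.Icc 0 1))
    (hu : ContDiffOn ℝ 4 u (Set.Icc 0 1))
    (hode : ∀ s ∈ Set.Ioo (0 : ℝ) 1,
      iteratedDerivWithin 4 u (Set.Icc 0 1) s + y s = 0)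
    (hbc1 : derivWithin u (Set.Icc 0 1) 0 = 0)
    (hbc2 : derivWithin u (Set.Icc 0 1) 1 = 0)
    (hbc3 : iteratedDerivWithin 2 u (Set.Icc 0 1) 0 = 0)
    {t : ℝ} (ht : t ∈ Set.Icc (0:ℝ) 1) :
    ∫ s in (0:ℝ)..1, G t s * y s = u t - u 0 := by
  have hUD : UniqueDiffOn ℝ (Icc (0:ℝ) 1) := uniqueDiffOn_Icc one_pos
  set U : ℕ → ℝ → ℝ := fun k => iteratedDerivWithin k u (Set.Icc 0 1) with hU
  have hderivU : ∀ k : ℕ, k < 4 → ∀ x ∈ Icc (0:ℝ) 1,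
      HasDerivWithinAt (U k) (U (k+1) x) (Icc 0 1) x := by
    intro k hk x hx
    have hd := (hu.differentiableOn_iteratedDerivWithin (by exact_mod_cast hk) hUD) x hx
    have h2 := hd.hasDerivWithinAt
    rwa [← iteratedDerivWithin_succ] at h2
  have hcontU : ∀ k : ℕ, k ≤ 4 → ContinuousOn (U k) (Icc (0:ℝ) 1) := by
    intro k hk
    exact hu.continuousOn_iteratedDerivWithin (by exact_mod_cast hk) hUD
  set g1 : ℝ → ℝ := fun s => (t ^ 3 * (1 - s) ^ 2 - (t - s) ^ 3) / 6 with hg1def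
  set g1' : ℝ → ℝ := fun s => (3 * (t - s) ^ 2 - 2 * t ^ 3 * (1 - s)) / 6 with hg1'def
  set g1'' : ℝ → ℝ := fun s => t ^ 3 / 3 - (t - s) with hg1''def
  set g2 : ℝ → ℝ := fun s => t ^ 3 * (1 - s) ^ 2 / 6 with hg2def
  set g2' : ℝ → ℝ := fun s => -(t ^ 3 * (1 - s)) / 3 with hg2'def
  set F1 : ℝ → ℝ := fun s => g1 s * U 3 s - g1' s * U 2 s + g1'' s * U 1 s - U 0 s with hF1def
  set F2 : ℝ → ℝ := fun s => g2 s * U 3 s - g2' s * U 2 s + (t ^ 3 / 3) * U 1 s with hF2def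
  -- derivatives of F1, F2 within Icc 0 1
  have hF1 : ∀ x ∈ Icc (0:ℝ) 1, HasDerivWithinAt F1 (g1 x * U 4 x) (Icc 0 1) x := by
    intro x hx
    have h1 := ((hasDerivAt_g1 t x).hasDerivWithinAt.mul (hderivU 3 (by norm_num) x hx))
    have h2 := ((hasDerivAt_g1' t x).hasDerivWithinAt.mul (hderivU 2 (by norm_num) x hx))
    have h3 := ((hasDerivAt_g1'' t x).hasDerivWithinAt.mul (hderivU 1 (by norm_num) x hx))
    have h4 := hderivU 0 (by norm_num) x hx
    have h := ((h1.sub h2).add h3).sub h4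
    refine h.congr_deriv ?_
    simp only [hg1def, hg1'def, hg1''def]
    ring
  have hF2 : ∀ x ∈ Icc (0:ℝ) 1, HasDerivWithinAt F2 (g2 x * U 4 x) (Icc 0 1) x := by
    intro x hx
    have h1 := ((hasDerivAt_g2 t x).hasDerivWithinAt.mul (hderivU 3 (by norm_num) x hx))
    have h2 := ((hasDerivAt_g2' t x).hasDerivWithinAt.mul (hderivU 2 (by norm_num) x hx))
    have h3 := (hderivU 1 (by norm_num) x hx).const_mul (t ^ 3 / 3)
    have h := (h1.sub h2).add h3
    refine h.congr_deriv ?_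
    simp only [hg2def, hg2'def]
    ring
  have cg1 : Continuous g1 := by rw [hg1def]; fun_prop
  have cg1' : Continuous g1' := by rw [hg1'def]; fun_prop
  have cg1'' : Continuous g1'' := by rw [hg1''def]; fun_prop
  have cg2 : Continuous g2 := by rw [hg2def]; fun_prop
  have cg2' : Continuous g2' := by rw [hg2'def]; fun_prop
  have hcontF1 : ContinuousOn F1 (Icc (0:ℝ) 1) := by
    rw [hF1def]
    exact (((cg1.continuousOn.mul (hcontU 3 (by norm_num))).sub
      (cg1'.continuousOn.mul (hcontU 2 (by norm_num)))).add
      (cg1''.continuousOn.mul (hcontU 1 (by norm_num)))).sub (hcontU 0 (by norm_num))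
  have hcontF2 : ContinuousOn F2 (Icc (0:ℝ) 1) := by
    rw [hF2def]
    exact ((cg2.continuousOn.mul (hcontU 3 (by norm_num))).sub
      (cg2'.continuousOn.mul (hcontU 2 (by norm_num)))).add
      ((hcontU 1 (by norm_num)).const_smul (t ^ 3 / 3))
  have hI1 : ∫ s in (0:ℝ)..t, g1 s * U 4 s = F1 t - F1 0 := by
    apply intervalIntegral.integral_eq_sub_of_hasDeriv_right_of_le ht.1
    · exact hcontF1.mono (Icc_subset_Icc le_rfl ht.2)
    · intro x hx
      have hx1 : x ∈ Ioo (0:ℝ) 1 := ⟨hx.1, lt_of_lt_of_le hx.2 ht.2⟩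
      exact ((hF1 x (Ioo_subset_Icc_self hx1)).hasDerivAt
        (Icc_mem_nhds hx1.1 hx1.2)).hasDerivWithinAt
    · apply ContinuousOn.intervalIntegrable
      exact (cg1.continuousOn.mul (hcontU 4 le_rfl)).mono
        (by rw [uIcc_of_le ht.1]; exact Icc_subset_Icc le_rfl ht.2)
  have hI2 : ∫ s in t..1, g2 s * U 4 s = F2 1 - F2 t := by
    apply intervalIntegral.integral_eq_sub_of_hasDeriv_right_of_le ht.2
    · exact hcontF2.mono (Icc_subset_Icc ht.1 le_rfl)
    · intro x hx
      have hx1 : x ∈ Ioo (0:ℝ) 1 := ⟨lt_of_le_of_lt ht.1 hx.1, hx.2⟩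
      exact ((hF2 x (Ioo_subset_Icc_self hx1)).hasDerivAt
        (Icc_mem_nhds hx1.1 hx1.2)).hasDerivWithinAt
    · apply ContinuousOn.intervalIntegrable
      exact (cg2.continuousOn.mul (hcontU 4 le_rfl)).mono
        (by rw [uIcc_of_le ht.2]; exact Icc_subset_Icc ht.1 le_rfl)
  have hne1 : ∀ᵐ x : ℝ, x ≠ (1:ℝ) := by
    simp only [ae_iff, not_not, Set.setOf_eq_eq_singleton]
    exact Real.volume_singleton
  have hGy1 : ∫ s in (0:ℝ)..t, G t s * y s = ∫ s in (0:ℝ)..t, -(g1 s * U 4 s) := by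
    apply intervalIntegral.integral_congr_ae
    filter_upwards [hne1] with x hx1 hx
    rw [uIoc_of_le ht.1] at hx
    have hxI : x ∈ Ioo (0:ℝ) 1 := ⟨hx.1, lt_of_le_of_ne (le_trans hx.2 ht.2) hx1⟩
    have hyx : y x = -(U 4 x) := by
      have := hode x hxI; linarith
    rw [G, if_pos hx.2, hyx]
    rw [hg1def]; ring
  have hGy2 : ∫ s in t..(1:ℝ), G t s * y s = ∫ s in t..(1:ℝ), -(g2 s * U 4 s) := by
    apply intervalIntegral.integral_congr_ae
    filter_upwards [hne1] with x hx1 hx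
    rw [uIoc_of_le ht.2] at hx
    have hxI : x ∈ Ioo (0:ℝ) 1 := ⟨lt_of_le_of_lt ht.1 hx.1, lt_of_le_of_ne hx.2 hx1⟩
    have hyx : y x = -(U 4 x) := by
      have := hode x hxI; linarith
    rw [G, if_neg (not_le.2 hx.1), hyx]
    rw [hg2def]; ring
  have hGcont : ContinuousOn (fun s => G t s * y s) (Icc (0:ℝ) 1) := by
    exact ((G_cont.comp (continuous_const.prodMk continuous_id)).continuousOn).mul hy
  have hsplit : ∫ s in (0:ℝ)..1, G t s * y s
      = (∫ s in (0:ℝ)..t, G t s * y s) + ∫ s in t..(1:ℝ), G t s * y s := by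
    symm
    apply intervalIntegral.integral_add_adjacent_intervals
    · exact (hGcont.mono (by rw [uIcc_of_le ht.1]; exact Icc_subset_Icc le_rfl ht.2)).intervalIntegrable
    · exact (hGcont.mono (by rw [uIcc_of_le ht.2]; exact Icc_subset_Icc ht.1 le_rfl)).intervalIntegrable
  have hU0 : ∀ s, U 0 s = u s := by intro s; rw [hU]; simp [iteratedDerivWithin_zero]
  have hU1_0 : U 1 0 = 0 := by
    rw [hU]; simp only
    rw [iteratedDerivWithin_one]
    exact hbc1
  have hU1_1 : U 1 1 = 0 := by
    rw [hU]; simp only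
    rw [iteratedDerivWithin_one]
    exact hbc2
  have hU2_0 : U 2 0 = 0 := hbc3
  have hF1_0 : F1 0 = -u 0 := by
    have h1 : g1 0 = 0 := by rw [hg1def]; ring
    simp only [hF1def]
    rw [h1, hU2_0, hU1_0, hU0]; ring
  have hF2_1 : F2 1 = 0 := by
    have h1 : g2 1 = 0 := by rw [hg2def]; ring
    have h2 : g2' 1 = 0 := by rw [hg2'def]; ring
    simp only [hF2def]
    rw [h1, h2, hU1_1]; ring
  have hF1t : F1 t = F2 t - u t := by
    have e1 : g1 t = g2 t := by rw [hg1def, hg2def]; ring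
    have e2 : g1' t = g2' t := by rw [hg1'def, hg2'def]; ring
    have e3 : g1'' t = t ^ 3 / 3 := by rw [hg1''def]; ring
    simp only [hF1def, hF2def]
    rw [e1, e2, e3, hU0]
  rw [hsplit, hGy1, hGy2, intervalIntegral.integral_neg, intervalIntegral.integral_neg,
    hI1, hI2, hF1_0, hF2_1, hF1t]
  ring

set_option maxHeartbeats 1000000 in
theorem stmt_0 (y a u : ℝ → ℝ)
    (hy : ContinuousOn y (Set.Icc 0 1))
    (ha : ContinuousOn a (Set.Icc 0 1))
    (ha0 : ∀ t ∈ Set.Icc (0 : ℝ) 1, 0 ≤ a t)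
    (hα0 : 0 < ∫ t in (0 : ℝ)..1, a t)
    (hα1 : (∫ t in (0 : ℝ)..1, a t) < 1)
    (hu : ContDiffOn ℝ 4 u (Set.Icc 0 1))
    (hode : ∀ t ∈ Set.Ioo (0 : ℝ) 1,
      iteratedDerivWithin 4 u (Set.Icc 0 1) t + y t = 0)
    (hbc1 : derivWithin u (Set.Icc 0 1) 0 = 0)
    (hbc2 : derivWithin u (Set.Icc 0 1) 1 = 0)
    (hbc3 : iteratedDerivWithin 2 u (Set.Icc 0 1) 0 = 0)
    (hbc4 : u 0 = ∫ s in (0 : ℝ)..1, a s * u s) :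
    ∀ t ∈ Set.Icc (0 : ℝ) 1,
      u t = ∫ s in (0 : ℝ)..1,
        (G t s + (1 / (1 - ∫ τ in (0 : ℝ)..1, a τ)) *
          ∫ τ in (0 : ℝ)..1, a τ * G τ s) * y s := by
  intro t ht
  have hkey : ∀ τ ∈ Icc (0:ℝ) 1, ∫ s in Ioc (0:ℝ) 1, G τ s * y s = u τ - u 0 := by
    intro τ hτ
    have hk := key y u hy hu hode hbc1 hbc2 hbc3 hτ
    rwa [intervalIntegral.integral_of_le zero_le_one] at hk
  have hGc : ∀ r : ℝ, Continuous fun s => G r s := fun r =>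
    G_cont.comp (continuous_const.prodMk continuous_id)
  -- integrability of the product kernel
  have hPc : ContinuousOn (fun p : ℝ × ℝ => a p.1 * G p.1 p.2 * y p.2)
      (Icc 0 1 ×ˢ Icc 0 1) := by
    apply ContinuousOn.mul
    · apply ContinuousOn.mul
      · exact ha.comp continuous_fst.continuousOn (fun p hp => hp.1)
      · exact G_cont.continuousOn
    · exact hy.comp continuous_snd.continuousOn (fun p hp => hp.2)
  have hPint : Integrable (fun p : ℝ × ℝ => a p.1 * G p.1 p.2 * y p.2)
      ((volume.restrict (Ioc (0:ℝ) 1)).prod (volume.restrict (Ioc (0:ℝ) 1))) := by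
    rw [Measure.prod_restrict]
    have h1 : IntegrableOn (fun p : ℝ × ℝ => a p.1 * G p.1 p.2 * y p.2)
        (Icc 0 1 ×ˢ Icc 0 1) (volume.prod volume) :=
      hPc.integrableOn_compact (isCompact_Icc.prod isCompact_Icc)
    exact h1.mono_set (prod_mono Ioc_subset_Icc_self Ioc_subset_Icc_self)
  -- basic integrability facts
  have hauint : IntegrableOn (fun τ => a τ * u τ) (Ioc (0:ℝ) 1) :=
    ((ha.mul hu.continuousOn).integrableOn_compact isCompact_Icc).mono_set Ioc_subset_Icc_self
  have haint : IntegrableOn a (Ioc (0:ℝ) 1) :=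
    (ha.integrableOn_compact isCompact_Icc).mono_set Ioc_subset_Icc_self
  -- the swap computation
  have hswap : ∫ s in Ioc (0:ℝ) 1, (∫ τ in Ioc (0:ℝ) 1, a τ * G τ s) * y s
      = (1 - ∫ τ in (0:ℝ)..1, a τ) * u 0 := by
    have h1 : ∫ s in Ioc (0:ℝ) 1, (∫ τ in Ioc (0:ℝ) 1, a τ * G τ s) * y s
        = ∫ s in Ioc (0:ℝ) 1, ∫ τ in Ioc (0:ℝ) 1, a τ * G τ s * y s := by
      refine integral_congr_ae (Filter.Eventually.of_forall fun s => ?_)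
      exact (MeasureTheory.integral_mul_const _ _).symm
    have h2 : ∫ s in Ioc (0:ℝ) 1, ∫ τ in Ioc (0:ℝ) 1, a τ * G τ s * y s
        = ∫ τ in Ioc (0:ℝ) 1, ∫ s in Ioc (0:ℝ) 1, a τ * G τ s * y s :=
      (integral_integral_swap (by exact hPint)).symm
    have h3 : ∫ τ in Ioc (0:ℝ) 1, ∫ s in Ioc (0:ℝ) 1, a τ * G τ s * y s
        = ∫ τ in Ioc (0:ℝ) 1, a τ * (u τ - u 0) := by
      refine setIntegral_congr_fun measurableSet_Ioc fun τ hτ => ?_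
      simp only [mul_assoc]
      rw [MeasureTheory.integral_const_mul]
      congr 1
      exact hkey τ (Ioc_subset_Icc_self hτ)
    have h4 : ∫ τ in Ioc (0:ℝ) 1, a τ * (u τ - u 0)
        = (∫ τ in Ioc (0:ℝ) 1, a τ * u τ) - (∫ τ in Ioc (0:ℝ) 1, a τ) * u 0 := by
      simp only [mul_sub]
      rw [integral_sub hauint (haint.mul_const (u 0)), MeasureTheory.integral_mul_const]
    have e1 : (∫ τ in (0:ℝ)..1, a τ) = ∫ τ in Ioc (0:ℝ) 1, a τ :=
      intervalIntegral.integral_of_le zero_le_one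
    have e2 : u 0 = ∫ τ in Ioc (0:ℝ) 1, a τ * u τ := by
      rw [hbc4, intervalIntegral.integral_of_le zero_le_one]
    rw [h1, h2, h3, h4, ← e2, e1]
    ring
  -- split the main integral
  have hint1 : IntegrableOn (fun s => G t s * y s) (Ioc (0:ℝ) 1) :=
    (((hGc t).continuousOn.mul hy).integrableOn_compact isCompact_Icc).mono_set
      Ioc_subset_Icc_self
  have hint2 : IntegrableOn (fun s => (∫ τ in Ioc (0:ℝ) 1, a τ * G τ s) * y s)
      (Ioc (0:ℝ) 1) := by
    have h := hPint.integral_prod_right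
    simp only [MeasureTheory.integral_mul_const] at h
    exact h
  have hα1' : (1 : ℝ) - (∫ τ in (0:ℝ)..1, a τ) ≠ 0 := by linarith
  rw [intervalIntegral.integral_of_le zero_le_one]
  simp only [intervalIntegral.integral_of_le zero_le_one]
  have hexp : ∀ s : ℝ,
      (G t s + (1 / (1 - ∫ τ in Ioc (0:ℝ) 1, a τ)) * ∫ τ in Ioc (0:ℝ) 1, a τ * G τ s) * y s
      = G t s * y s + (1 / (1 - ∫ τ in Ioc (0:ℝ) 1, a τ)) *
          ((∫ τ in Ioc (0:ℝ) 1, a τ * G τ s) * y s) := by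
    intro s; ring
  rw [integral_congr_ae (Filter.Eventually.of_forall fun s => hexp s)]
  rw [integral_add hint1 (hint2.const_mul _), MeasureTheory.integral_const_mul, hkey t ht, hswap,
    ← intervalIntegral.integral_of_le zero_le_one]
  field_simp
  ring
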